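/- Let p be a prime, k a perfect field of characteristic p, and Λ = W(k) the ring of p-typical Witt vectors of k (so p is a uniformizer of Λ and Λ/pΛ ≅ k). Let X be a locally compact Hausdorff totally disconnected topological space and σ : X → X a homeomorphism with σ^p = id, acting on C_c^∞(X;Λ) by f ↦ f∘σ. Then the map T^0(C_c^∞(X;Λ)) → C_c^∞(X^σ;k), given by restricting a function to the fixed-point set X^σ and reducing its values modulo p, is an isomorphism of abelian groups, and moreover T^1(C_c^∞(X;Λ)) = 0. -/

import Mathlib

open Function Set

namespace TateAux

set_option linter.unusedSectionVars false
variable {p : ℕ} [hp : Fact p.Prime]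
variable {X : Type*} [TopologicalSpace X]

/-- indicator of a clopen set times a locally constant function is locally constant -/
theorem isLocallyConstant_indicator {Z : Type*} [Zero Z] {S : Set X} (hS : IsClopen S)
    {h : X → Z} (hh : IsLocallyConstant h) : IsLocallyConstant (S.indicator h) := by
  rw [IsLocallyConstant.iff_exists_open]
  intro x
  by_cases hx : x ∈ S
  · obtain ⟨U, hU, hxU, hU'⟩ := hh.exists_open x
    exact ⟨U ∩ S, hU.inter hS.2, ⟨hxU, hx⟩, fun y hy => by
      simp [Set.indicator_of_mem hy.2, Set.indicator_of_mem hx, hU' y hy.1]⟩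
  · exact ⟨Sᶜ, hS.1.isOpen_compl, hx, fun y hy => by
      simp [Set.indicator_of_notMem hy, Set.indicator_of_notMem hx]⟩

theorem isLocallyConstant_sum {Z : Type*} [AddCommMonoid Z] {ι : Type*} (s : Finset ι)
    (F : ι → X → Z) (h : ∀ i ∈ s, IsLocallyConstant (F i)) :
    IsLocallyConstant (fun x => ∑ i ∈ s, F i x) := by
  classical
  induction s using Finset.induction with
  | empty => simp only [Finset.sum_empty]; exact IsLocallyConstant.const 0
  | insert _ _ hni ih =>
    rename_i a s
    simp only [Finset.sum_insert hni]
    exact (h a (Finset.mem_insert_self ..)).add (ih fun j hj => h j (Finset.mem_insert_of_mem hj))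

variable [LocallyCompactSpace X] [T2Space X] [TotallyDisconnectedSpace X]

theorem exists_compactOpen {x : X} {O : Set X} (hO : IsOpen O) (hx : x ∈ O) :
    ∃ V : Set X, IsCompact V ∧ IsOpen V ∧ x ∈ V ∧ V ⊆ O := by
  obtain ⟨K, hK, hxK, hKO⟩ := exists_compact_subset hO hx
  obtain ⟨V, hV, hxV, hVK⟩ :=
    loc_compact_Haus_tot_disc_of_zero_dim.exists_subset_of_mem_open hxK isOpen_interior
  exact ⟨V, hK.of_isClosed_subset hV.1 (hVK.trans interior_subset), hV.2, hxV,
    (hVK.trans interior_subset).trans hKO⟩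

section Sigma

variable {σ : X ≃ₜ X}

theorem iterate_mem {U : Set X} (hU : ∀ y ∈ U, σ y ∈ U) :
    ∀ (i : ℕ) {y : X}, y ∈ U → (⇑σ)^[i] y ∈ U := by
  intro i
  induction i with
  | zero => exact fun h => h
  | succ n ih =>
    intro y hy
    rw [Function.iterate_succ_apply]
    exact ih (hU y hy)

theorem mem_of_iterate_mem (hσ : ∀ x, (⇑σ)^[p] x = x) {U : Set X} (hU : ∀ y ∈ U, σ y ∈ U)
    {i : ℕ} (hi : i ≤ p) {x : X} (h : (⇑σ)^[i] x ∈ U) : x ∈ U := by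
  have h2 := iterate_mem hU (p - i) h
  rwa [← Function.iterate_add_apply, Nat.sub_add_cancel hi, hσ] at h2

theorem iterate_ne (hσ : ∀ x, (⇑σ)^[p] x = x) {x : X} (hx : ¬σ x = x) {d : ℕ}
    (hd0 : 0 < d) (hdp : d < p) : (⇑σ)^[d] x ≠ x := by
  intro h
  have hper : Function.IsPeriodicPt (⇑σ) d x := h
  have hperp : Function.IsPeriodicPt (⇑σ) p x := hσ x
  have h1 : Function.minimalPeriod (⇑σ) x ∣ d := hper.minimalPeriod_dvd
  have h2 : Function.minimalPeriod (⇑σ) x ∣ p := hperp.minimalPeriod_dvd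
  rcases (hp.out.eq_one_or_self_of_dvd _ h2) with h3 | h3
  · exact hx ((Function.minimalPeriod_eq_one_iff_isFixedPt.1 h3))
  · have := Nat.le_of_dvd hd0 h1
    omega

theorem exists_invariant_nbhd (hσ : ∀ x, (⇑σ)^[p] x = x) {x : X} {O : Set X}
    (hfix : σ x = x) (hO : IsOpen O) (hx : x ∈ O) :
    ∃ U : Set X, IsCompact U ∧ IsOpen U ∧ x ∈ U ∧ U ⊆ O ∧ ∀ y ∈ U, σ y ∈ U := by
  obtain ⟨V, hVc, hVo, hxV, hVO⟩ := exists_compactOpen hO hx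
  refine ⟨⋂ i ∈ Finset.range p, (⇑σ)^[i] ⁻¹' V, ?_, ?_, ?_, ?_, ?_⟩
  · refine hVc.of_isClosed_subset ?_ ?_
    · exact isClosed_biInter fun i _ => (hVc.isClosed).preimage ((σ.continuous).iterate i)
    · intro y hy
      simpa using Set.mem_iInter₂.1 hy 0 (by simpa using hp.out.pos)
  · exact isOpen_biInter_finset fun i _ => hVo.preimage ((σ.continuous).iterate i)
  · exact Set.mem_biInter fun i _ => by simp [Function.iterate_fixed hfix, hxV]
  · intro y hy
    exact hVO (by simpa using Set.mem_iInter₂.1 hy 0 (by simpa using hp.out.pos))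
  · intro y hy
    simp only [Set.mem_iInter, Set.mem_preimage] at hy ⊢
    intro i hi
    rw [Finset.mem_range] at hi
    rw [← Function.iterate_succ_apply]
    rcases Nat.lt_or_ge (i + 1) p with h | h
    · exact hy (i + 1) (Finset.mem_range.2 h)
    · have hip : i + 1 = p := by omega
      rw [show i.succ = p from hip, hσ]
      exact hy 0 (Finset.mem_range.2 hp.out.pos)


theorem isCompact_preimage_iterate {S : Set X} (hS : IsCompact S) (i : ℕ) :
    IsCompact ((⇑σ)^[i] ⁻¹' S) := by
  induction i with
  | zero => simpa using hS
  | succ n ih =>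
    rw [Function.iterate_succ, Set.preimage_comp]
    exact σ.isCompact_preimage.2 ih

theorem exists_free_nbhd (hσ : ∀ x, (⇑σ)^[p] x = x) {x : X} (hx : ¬σ x = x) {O : Set X}
    (hO : IsOpen O) (hxO : x ∈ O) :
    ∃ U : Set X, IsCompact U ∧ IsOpen U ∧ x ∈ U ∧ U ⊆ O ∧
      ∀ y ∈ U, ∀ d, 0 < d → d < p → (⇑σ)^[d] y ∉ U := by
  have hsep : ∀ d : ℕ, ∃ A B : Set X, IsOpen A ∧ IsOpen B ∧ x ∈ A ∧ (⇑σ)^[d] x ∈ B ∧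
      (0 < d → d < p → Disjoint A B) := by
    intro d
    by_cases hd : 0 < d ∧ d < p
    · obtain ⟨A, B, hA, hB, hxA, hxB, hAB⟩ :=
        t2_separation (Ne.symm (iterate_ne hσ hx hd.1 hd.2))
      exact ⟨A, B, hA, hB, hxA, hxB, fun _ _ => hAB⟩
    · exact ⟨Set.univ, Set.univ, isOpen_univ, isOpen_univ, Set.mem_univ x,
        Set.mem_univ _, fun h1 h2 => absurd ⟨h1, h2⟩ hd⟩
  choose A B hA hB hxA hxB hAB using hsep
  set O' : Set X := O ∩ ⋂ d ∈ Finset.range p, (A d ∩ (⇑σ)^[d] ⁻¹' B d) with hO'def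
  have hO'open : IsOpen O' := by
    refine hO.inter (isOpen_biInter_finset fun d _ => (hA d).inter ?_)
    exact (hB d).preimage ((σ.continuous).iterate d)
  have hxO' : x ∈ O' := by
    refine ⟨hxO, ?_⟩
    simp only [Set.mem_iInter, Set.mem_inter_iff, Set.mem_preimage]
    exact fun d _ => ⟨hxA d, hxB d⟩
  obtain ⟨U, hUc, hUo, hxU, hUO'⟩ := exists_compactOpen hO'open hxO'
  refine ⟨U, hUc, hUo, hxU, fun y hy => (hUO' hy).1, ?_⟩
  intro y hy d hd0 hdp hcon
  have hyO' := hUO' hy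
  have hconO' := hUO' hcon
  have h1 : (⇑σ)^[d] y ∈ B d := by
    have := hyO'.2
    simp only [Set.mem_iInter, Set.mem_inter_iff, Set.mem_preimage] at this
    exact (this d (Finset.mem_range.2 hdp)).2
  have h2 : (⇑σ)^[d] y ∈ A d := by
    have := hconO'.2
    simp only [Set.mem_iInter, Set.mem_inter_iff, Set.mem_preimage] at this
    exact (this d (Finset.mem_range.2 hdp)).1
  exact Set.disjoint_left.1 (hAB d hd0 hdp) h2 h1



/-- uniqueness of the index of a point relative to a set with disjoint translates -/
theorem fd_unique (hσ : ∀ x, (⇑σ)^[p] x = x) {V : Set X}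
    (hD : ∀ v ∈ V, ∀ d, 0 < d → d < p → (⇑σ)^[d] v ∉ V)
    {x : X} {i j : ℕ} (hi : i < p) (hj : j < p)
    (hiV : (⇑σ)^[i] x ∈ V) (hjV : (⇑σ)^[j] x ∈ V) : i = j := by
  rcases lt_trichotomy i j with h | h | h
  · exfalso
    have : (⇑σ)^[j - i] ((⇑σ)^[i] x) ∈ V := by
      rw [← Function.iterate_add_apply, Nat.sub_add_cancel h.le]
      exact hjV
    exact hD _ hiV (j - i) (by omega) (by omega) this
  · exact h
  · exfalso
    have : (⇑σ)^[i - j] ((⇑σ)^[j] x) ∈ V := by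
      rw [← Function.iterate_add_apply, Nat.sub_add_cancel h.le]
      exact hiV
    exact hD _ hjV (i - j) (by omega) (by omega) this

theorem greedy (hσ : ∀ x, (⇑σ)^[p] x = x) {K : Set X} :
    ∀ L : List (Set X),
      (∀ U ∈ L, IsCompact U ∧ IsOpen U ∧ U ⊆ K ∧
        ∀ y ∈ U, ∀ d, 0 < d → d < p → (⇑σ)^[d] y ∉ U) →
      ∃ V : Set X, IsCompact V ∧ IsOpen V ∧ V ⊆ K ∧
        (∀ U ∈ L, ∀ x ∈ U, ∃ i, i < p ∧ (⇑σ)^[i] x ∈ V) ∧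
        (∀ v ∈ V, ∀ d, 0 < d → d < p → (⇑σ)^[d] v ∉ V) := by
  intro L
  induction L with
  | nil =>
    exact fun _ => ⟨∅, isCompact_empty, isOpen_empty, Set.empty_subset K,
      fun U hU => absurd hU List.not_mem_nil, fun v hv => absurd hv (Set.notMem_empty v)⟩
  | cons U L ih =>
    intro hL
    obtain ⟨V, hVc, hVo, hVK, hVcov, hVD⟩ := ih fun W hW => hL W (List.mem_cons_of_mem U hW)
    obtain ⟨hUc, hUo, hUK, hUD⟩ := hL U (List.mem_cons_self)
    set Orb : Set X := ⋃ i ∈ Finset.range p, (⇑σ)^[i] ⁻¹' V with hOrb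
    have hOrbOpen : IsOpen Orb :=
      isOpen_biUnion fun i _ => hVo.preimage ((σ.continuous).iterate i)
    have hOrbClosed : IsClosed Orb := by
      refine Set.Finite.isClosed_biUnion (Finset.finite_toSet _) fun i _ => ?_
      exact hVc.isClosed.preimage ((σ.continuous).iterate i)
    refine ⟨V ∪ (U \ Orb), hVc.union (hUc.of_isClosed_subset
        (hUc.isClosed.inter hOrbOpen.isClosed_compl) fun y hy => hy.1),
      hVo.union (hUo.inter hOrbClosed.isOpen_compl), ?_, ?_, ?_⟩
    · exact Set.union_subset hVK fun y hy => hUK hy.1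
    · intro W hW x hx
      rcases List.mem_cons.1 hW with rfl | hWL
      · by_cases hxOrb : x ∈ Orb
        · simp only [hOrb, Set.mem_iUnion, Set.mem_preimage, exists_prop,
            Finset.mem_range] at hxOrb
          obtain ⟨i, hip, hiV⟩ := hxOrb
          exact ⟨i, hip, Or.inl hiV⟩
        · exact ⟨0, hp.out.pos, Or.inr ⟨by simpa using hx, hxOrb⟩⟩
      · obtain ⟨i, hip, hiV⟩ := hVcov W hWL x hx
        exact ⟨i, hip, Or.inl hiV⟩
    · rintro v (hv | hv) d hd0 hdp (hc | hc)
      · exact hVD v hv d hd0 hdp hc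
      · refine hc.2 ?_
        simp only [hOrb, Set.mem_iUnion, Set.mem_preimage, exists_prop, Finset.mem_range]
        exact ⟨p - d, by omega, by
          rw [← Function.iterate_add_apply, Nat.sub_add_cancel hdp.le, hσ]; exact hv⟩
      · refine hv.2 ?_
        simp only [hOrb, Set.mem_iUnion, Set.mem_preimage, exists_prop, Finset.mem_range]
        exact ⟨d, hdp, hc⟩
      · exact hUD v hv.1 d hd0 hdp hc.1

/-- fundamental domain for a free action on an invariant compact open set -/
theorem exists_fundamental_domain (hσ : ∀ x, (⇑σ)^[p] x = x) {K : Set X}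
    (hKc : IsCompact K) (hKo : IsOpen K) (hfree : ∀ x ∈ K, ¬σ x = x) :
    ∃ V : Set X, IsCompact V ∧ IsOpen V ∧ V ⊆ K ∧
      (∀ x ∈ K, ∃ i, i < p ∧ (⇑σ)^[i] x ∈ V) ∧
      (∀ v ∈ V, ∀ d, 0 < d → d < p → (⇑σ)^[d] v ∉ V) := by
  have hnbhd : ∀ x ∈ K, ∃ U : Set X, IsCompact U ∧ IsOpen U ∧ x ∈ U ∧ U ⊆ K ∧
      ∀ y ∈ U, ∀ d, 0 < d → d < p → (⇑σ)^[d] y ∉ U :=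
    fun x hx => exists_free_nbhd hσ (hfree x hx) hKo hx
  choose! Ux hUc hUo hxU hUK hUD using hnbhd
  obtain ⟨t, ht⟩ := hKc.elim_nhds_subcover' (fun x hx => Ux x)
    (fun x hx => (hUo x hx).mem_nhds (hxU x hx))
  obtain ⟨V, hVc, hVo, hVK, hVcov, hVD⟩ := greedy hσ (t.toList.map (fun x => Ux x.1))
    (by
      intro W hW
      simp only [List.mem_map] at hW
      obtain ⟨x, hx, rfl⟩ := hW
      exact ⟨hUc x.1 x.2, hUo x.1 x.2, hUK x.1 x.2, hUD x.1 x.2⟩)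
  refine ⟨V, hVc, hVo, hVK, ?_, hVD⟩
  intro x hx
  obtain ⟨y, hyt, hyU⟩ : ∃ y ∈ t, x ∈ Ux y.1 := by
    have := ht hx
    simp only [Set.mem_iUnion, exists_prop] at this
    exact this
  exact hVcov (Ux y.1) (List.mem_map.2 ⟨y, Finset.mem_toList.2 hyt, rfl⟩) x hyU


theorem glue (hσ : ∀ x, (⇑σ)^[p] x = x) {M : Type*} [AddCommMonoid M] :
    ∀ L : List (Set X × M),
      (∀ P ∈ L, IsCompact P.1 ∧ IsOpen P.1 ∧ ∀ y ∈ P.1, σ y ∈ P.1) →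
      ∃ F : X → M, IsLocallyConstant F ∧ (∀ x, F (σ x) = F x) ∧
        ∀ x, (∃ P ∈ L, x ∈ P.1 ∧ F x = P.2) ∨ ((∀ P ∈ L, x ∉ P.1) ∧ F x = 0) := by
  intro L
  induction L with
  | nil =>
    exact fun _ => ⟨fun _ => 0, IsLocallyConstant.const 0, fun _ => rfl,
      fun x => Or.inr ⟨fun P hP => absurd hP List.not_mem_nil, rfl⟩⟩
  | cons P L ih =>
    intro hL
    obtain ⟨F', hF'lc, hF'inv, hF'⟩ := ih fun Q hQ => hL Q (List.mem_cons_of_mem P hQ)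
    obtain ⟨hPc, hPo, hPinv⟩ := hL P (List.mem_cons_self)
    have hPclopen : IsClopen P.1 := ⟨hPc.isClosed, hPo⟩
    refine ⟨fun x => P.1.indicator (fun _ => P.2) x + (P.1ᶜ).indicator F' x, ?_, ?_, ?_⟩
    · exact (isLocallyConstant_indicator hPclopen (IsLocallyConstant.const P.2)).add
        (isLocallyConstant_indicator hPclopen.compl hF'lc)
    · intro x
      beta_reduce
      have hiff : σ x ∈ P.1 ↔ x ∈ P.1 := by
        constructor
        · intro hx
          exact mem_of_iterate_mem hσ hPinv hp.out.one_le (by simpa using hx)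
        · exact hPinv x
      by_cases hx : x ∈ P.1
      · rw [Set.indicator_of_mem hx, Set.indicator_of_mem (hiff.2 hx),
          Set.indicator_of_notMem (Set.notMem_compl_iff.2 hx),
          Set.indicator_of_notMem (Set.notMem_compl_iff.2 (hiff.2 hx))]
      · rw [Set.indicator_of_notMem hx, Set.indicator_of_notMem (fun h => hx (hiff.1 h)),
          Set.indicator_of_mem (Set.mem_compl hx),
          Set.indicator_of_mem (Set.mem_compl (fun h => hx (hiff.1 h))), hF'inv]
    · intro x
      beta_reduce
      by_cases hx : x ∈ P.1
      · refine Or.inl ⟨P, List.mem_cons_self, hx, ?_⟩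
        rw [Set.indicator_of_mem hx, Set.indicator_of_notMem (Set.notMem_compl_iff.2 hx), add_zero]
      · have hval : P.1.indicator (fun _ => P.2) x + (P.1ᶜ).indicator F' x = F' x := by
          rw [Set.indicator_of_notMem hx, Set.indicator_of_mem (Set.mem_compl hx), zero_add]
        rcases hF' x with ⟨Q, hQL, hxQ, hFQ⟩ | ⟨hnone, h0⟩
        · exact Or.inl ⟨Q, List.mem_cons_of_mem P hQL, hxQ, by rw [hval, hFQ]⟩
        · refine Or.inr ⟨?_, by rw [hval, h0]⟩
          intro Q hQ
          rcases List.mem_cons.1 hQ with rfl | hQL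
          · exact hx
          · exact hnone Q hQL

end Sigma


section Witt

variable {k : Type*} [Field k] [CharP k p] [PerfectField k]

theorem coeff_zero_sum {ι : Type*} (s : Finset ι) (F : ι → WittVector p k) :
    (∑ i ∈ s, F i).coeff 0 = ∑ i ∈ s, (F i).coeff 0 := by
  classical
  induction s using Finset.induction with
  | empty => simp
  | insert _ _ hni ih =>
    rename_i a s
    rw [Finset.sum_insert hni, Finset.sum_insert hni, WittVector.add_coeff_zero, ih]

theorem exists_p_mul (a : WittVector p k) (ha : a.coeff 0 = 0) :
    ∃ b : WittVector p k, a = (p : WittVector p k) * b := by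
  by_cases h0 : a = 0
  · exact ⟨0, by simp [h0]⟩
  obtain ⟨m, b, hb0, hab⟩ := WittVector.exists_eq_pow_p_mul a h0
  rcases m with - | n
  · exfalso
    rw [hab, pow_zero, one_mul] at ha
    exact hb0 ha
  · exact ⟨(p : WittVector p k) ^ n * b, by rw [hab, pow_succ, mul_comm _ (p : WittVector p k),
      mul_assoc]⟩

theorem p_mul_cancel {b c : WittVector p k} (h : (p : WittVector p k) * b = (p : WittVector p k) * c) :
    b = c :=
  mul_left_cancel₀ (WittVector.p_nonzero p k) h

end Witt

end TateAux

/--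
Let `p` be a prime, `k` a perfect field of characteristic `p`, and `Λ = W(k)` the ring of
`p`-typical Witt vectors of `k` (reduction mod `p` being the zeroth-coefficient map
`W(k) → k`).  Let `X` be a locally compact Hausdorff totally disconnected space and
`σ : X ≃ₜ X` with `σ^p = id`, acting on `C_c^∞(X;Λ)` by `f ↦ f ∘ σ`.  Then the map
`T⁰(C_c^∞(X;Λ)) → C_c^∞(X^σ;k)` given by restricting to the fixed-point set and reducing
mod `p` is an isomorphism of abelian groups, and `T¹(C_c^∞(X;Λ)) = 0`.  As in the previous
statement this is expressed elementwise (the map is additive by construction).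
-/
theorem tate_ccInfty_witt
    (p : ℕ) [Fact p.Prime]
    (k : Type*) [Field k] [CharP k p] [PerfectField k]
    (X : Type*) [TopologicalSpace X] [LocallyCompactSpace X] [T2Space X]
    [TotallyDisconnectedSpace X]
    (σ : X ≃ₜ X) (hσ : ∀ x, (⇑σ)^[p] x = x) :
    -- reduced restriction lands in C_c^∞(X^σ; k)
    ((∀ f : X → WittVector p k, IsLocallyConstant f → HasCompactSupport f →
        IsLocallyConstant (fun x : {x : X // σ x = x} => (f x.1).coeff 0) ∧
        HasCompactSupport (fun x : {x : X // σ x = x} => (f x.1).coeff 0))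
    -- T⁰: the reduced restriction kills the image of the norm map
    ∧ (∀ g : X → WittVector p k, IsLocallyConstant g → HasCompactSupport g →
        ∀ x : X, σ x = x →
          ((∑ i ∈ Finset.range p, g ((⇑σ)^[i] x)).coeff 0) = 0)
    -- T⁰: injectivity of the induced map
    ∧ (∀ f : X → WittVector p k, IsLocallyConstant f → HasCompactSupport f →
        (∀ x, f (σ x) = f x) → (∀ x : X, σ x = x → (f x).coeff 0 = 0) →
        ∃ g : X → WittVector p k, IsLocallyConstant g ∧ HasCompactSupport g ∧
          ∀ x, f x = ∑ i ∈ Finset.range p, g ((⇑σ)^[i] x))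
    -- T⁰: surjectivity of the induced map
    ∧ (∀ h : {x : X // σ x = x} → k, IsLocallyConstant h → HasCompactSupport h →
        ∃ f : X → WittVector p k, IsLocallyConstant f ∧ HasCompactSupport f ∧
          (∀ x, f (σ x) = f x) ∧ ∀ x : {x : X // σ x = x}, (f x.1).coeff 0 = h x)
    -- T¹(C_c^∞(X;Λ)) = 0
    ∧ (∀ f : X → WittVector p k, IsLocallyConstant f → HasCompactSupport f →
        (∀ x, (∑ i ∈ Finset.range p, f ((⇑σ)^[i] x)) = 0) →
        ∃ g : X → WittVector p k, IsLocallyConstant g ∧ HasCompactSupport g ∧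
          ∀ x, f x = g x - g (σ x))) := by
  classical
  have hp0 : 0 < p := (Fact.out : p.Prime).pos
  have hσc : Continuous ⇑σ := σ.continuous
  have hSclosed : IsClosed {x : X | σ x = x} := isClosed_eq hσc continuous_id
  have hfiter : ∀ {f : X → WittVector p k}, (∀ x, f (σ x) = f x) →
      ∀ (i : ℕ) (x : X), f ((⇑σ)^[i] x) = f x := by
    intro f hfσ i
    induction i with
    | zero => simp
    | succ n ih => intro x; rw [Function.iterate_succ_apply, ih (σ x), hfσ]
  refine ⟨?_, ?_, ?_, ?_, ?_⟩
  · -- part 1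
    intro f hf hfc
    constructor
    · exact (hf.comp_continuous continuous_subtype_val).comp (fun a => a.coeff 0)
    · have hemb := hSclosed.isClosedEmbedding_subtypeVal
      apply HasCompactSupport.intro (hemb.isCompact_preimage hfc)
      intro x hx
      have h0 : f x.1 = 0 := image_eq_zero_of_notMem_tsupport hx
      simp [h0]
  · -- part 2
    intro g hg hgc x hx
    have hit : ∀ i : ℕ, (⇑σ)^[i] x = x := fun i => Function.iterate_fixed hx i
    rw [TateAux.coeff_zero_sum]
    simp only [hit]
    rw [Finset.sum_const, Finset.card_range]
    simp
  · -- part 3 : injectivity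
    intro f hf hfc hfσ hcoeff
    have hsupp_open : IsOpen (Function.support f) := by
      have : Function.support f = f ⁻¹' {0}ᶜ := by ext y; simp [Function.mem_support]
      rw [this]; exact hf _
    have hsupp_closed : IsClosed (Function.support f) := by
      have : (Function.support f)ᶜ = f ⁻¹' {0} := by ext y; simp [Function.mem_support]
      rw [← isOpen_compl_iff, this]; exact hf _
    have hsupp_cpt : IsCompact (Function.support f) :=
      hfc.of_isClosed_subset hsupp_closed (subset_tsupport f)
    set K : Set X := Function.support f with hKdef
    have hKinv : ∀ y ∈ K, σ y ∈ K := by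
      intro y hy
      simp only [hKdef, Function.mem_support] at hy ⊢
      rw [hfσ]; exact hy
    set c : X → WittVector p k :=
      fun x => if h : ∃ d, f x = (p : WittVector p k) * d then h.choose else 0 with hcdef
    have hclc : IsLocallyConstant c :=
      hf.comp (fun w => if h : ∃ d, w = (p : WittVector p k) * d then h.choose else 0)
    have hc_spec : ∀ x, (∃ d, f x = (p : WittVector p k) * d) →
        f x = (p : WittVector p k) * c x := by
      intro x hx
      simp only [hcdef, dif_pos hx]
      exact hx.choose_spec
    set Fix : Set X := {x | σ x = x} ∩ K with hFixdef
    have hFixcpt : IsCompact Fix :=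
      hsupp_cpt.of_isClosed_subset (hSclosed.inter hsupp_closed) Set.inter_subset_right
    have hnbhd : ∀ x ∈ Fix, ∃ U : Set X, IsCompact U ∧ IsOpen U ∧ x ∈ U ∧
        (∀ y ∈ U, f y = f x) ∧ ∀ y ∈ U, σ y ∈ U := by
      rintro x ⟨hfix, hxK⟩
      obtain ⟨U, hUc, hUo, hxU, hUO, hUinv⟩ := TateAux.exists_invariant_nbhd hσ hfix
        (hf {f x}) rfl
      exact ⟨U, hUc, hUo, hxU, fun y hy => hUO hy, hUinv⟩
    choose! Ux hUc hUo hxU hUconst hUinv using hnbhd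
    obtain ⟨t, ht⟩ := hFixcpt.elim_nhds_subcover' (fun x _ => Ux x)
      (fun x hx => (hUo x hx).mem_nhds (hxU x hx))
    set A : Set X := ⋃ x ∈ t, Ux x.1 with hAdef
    have hAo : IsOpen A := isOpen_biUnion fun x _ => hUo x.1 x.2
    have hAc : IsCompact A := t.isCompact_biUnion fun x _ => hUc x.1 x.2
    have hAinv : ∀ y ∈ A, σ y ∈ A := by
      intro y hy
      simp only [hAdef, Set.mem_iUnion, exists_prop] at hy ⊢
      obtain ⟨x, hxt, hyU⟩ := hy
      exact ⟨x, hxt, hUinv x.1 x.2 y hyU⟩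
    have hAK : A ⊆ K := by
      intro y hy
      simp only [hAdef, Set.mem_iUnion, exists_prop] at hy
      obtain ⟨x, hxt, hyU⟩ := hy
      have h1 : f y = f x.1 := hUconst x.1 x.2 y hyU
      have h2 : x.1 ∈ K := x.2.2
      simp only [hKdef, Function.mem_support] at h2 ⊢
      rw [h1]; exact h2
    have hAdvd : ∀ y ∈ A, ∃ d, f y = (p : WittVector p k) * d := by
      intro y hy
      simp only [hAdef, Set.mem_iUnion, exists_prop] at hy
      obtain ⟨x, hxt, hyU⟩ := hy
      rw [hUconst x.1 x.2 y hyU]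
      exact TateAux.exists_p_mul (f x.1) (hcoeff x.1 x.2.1)
    have hFixA : Fix ⊆ A := ht
    set B : Set X := K ∩ Aᶜ with hBdef
    have hBc : IsCompact B :=
      hsupp_cpt.of_isClosed_subset (hsupp_closed.inter hAo.isClosed_compl)
        Set.inter_subset_left
    have hBo : IsOpen B := hsupp_open.inter hAc.isClosed.isOpen_compl
    have hBinv : ∀ y ∈ B, σ y ∈ B := by
      rintro y ⟨hyK, hyA⟩
      refine ⟨hKinv y hyK, fun hc => hyA ?_⟩
      exact TateAux.mem_of_iterate_mem hσ hAinv (i := 1) hp0 (by simpa using hc)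
    have hBfree : ∀ x ∈ B, ¬ σ x = x := by
      rintro x ⟨hxK, hxA⟩ hfix
      exact hxA (hFixA ⟨hfix, hxK⟩)
    obtain ⟨V, hVc, hVo, hVB, hVcov, hVD⟩ := TateAux.exists_fundamental_domain hσ hBc hBo hBfree
    set g : X → WittVector p k := fun x => A.indicator c x + V.indicator f x with hgdef
    have hglc : IsLocallyConstant g :=
      (TateAux.isLocallyConstant_indicator ⟨hAc.isClosed, hAo⟩ hclc).add
        (TateAux.isLocallyConstant_indicator ⟨hVc.isClosed, hVo⟩ hf)
    have hg0 : ∀ x, x ∉ K → g x = 0 := by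
      intro x hx
      simp only [hgdef]
      rw [Set.indicator_of_notMem (fun hc => hx (hAK hc)),
        Set.indicator_of_notMem (fun hc => hx (hVB hc).1), add_zero]
    have hgc : HasCompactSupport g := HasCompactSupport.intro hsupp_cpt hg0
    refine ⟨g, hglc, hgc, ?_⟩
    intro x
    by_cases hxA : x ∈ A
    · have hterm : ∀ i ∈ Finset.range p, g ((⇑σ)^[i] x) = c x := by
        intro i _
        have hiA : (⇑σ)^[i] x ∈ A := TateAux.iterate_mem hAinv i hxA
        have hiV : (⇑σ)^[i] x ∉ V := fun hc => (hVB hc).2 hiA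
        have e1 := hc_spec _ (hAdvd _ hiA)
        have e2 := hc_spec x (hAdvd x hxA)
        have e3 := hfiter hfσ i x
        have hcc : c ((⇑σ)^[i] x) = c x := TateAux.p_mul_cancel (by rw [← e1, e3, e2])
        simp only [hgdef]
        rw [Set.indicator_of_mem hiA, Set.indicator_of_notMem hiV, add_zero, hcc]
      rw [Finset.sum_congr rfl hterm, Finset.sum_const, Finset.card_range, nsmul_eq_mul]
      exact hc_spec x (hAdvd x hxA)
    · by_cases hxK : x ∈ K
      · have hxB : x ∈ B := ⟨hxK, hxA⟩
        obtain ⟨i₀, hi₀, hi₀V⟩ := hVcov x hxB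
        rw [Finset.sum_eq_single_of_mem i₀ (Finset.mem_range.2 hi₀)]
        · have hiB : (⇑σ)^[i₀] x ∈ B := TateAux.iterate_mem hBinv i₀ hxB
          simp only [hgdef]
          rw [Set.indicator_of_notMem hiB.2, Set.indicator_of_mem hi₀V, zero_add,
            hfiter hfσ i₀ x]
        · intro j hj hne
          have hjB : (⇑σ)^[j] x ∈ B := TateAux.iterate_mem hBinv j hxB
          have hjV : (⇑σ)^[j] x ∉ V := fun hc =>
            hne (TateAux.fd_unique hσ hVD (Finset.mem_range.1 hj) hi₀ hc hi₀V)
          simp only [hgdef]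
          rw [Set.indicator_of_notMem hjB.2, Set.indicator_of_notMem hjV, add_zero]
      · have hz : ∀ i ∈ Finset.range p, g ((⇑σ)^[i] x) = 0 := by
          intro i hi
          apply hg0
          intro hc
          exact hxK (TateAux.mem_of_iterate_mem hσ hKinv (le_of_lt (Finset.mem_range.1 hi)) hc)
        rw [Finset.sum_congr rfl hz, Finset.sum_const, smul_zero]
        simpa [hKdef, Function.mem_support] using hxK

  · -- part 4 : surjectivity
    intro h hh hhc
    have hsupp_closed : IsClosed (Function.support h) := by
      have : (Function.support h)ᶜ = h ⁻¹' {0} := by ext y; simp [Function.mem_support]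
      rw [← isOpen_compl_iff, this]; exact hh _
    have hsupp_cpt : IsCompact (Function.support h) :=
      hhc.of_isClosed_subset hsupp_closed (subset_tsupport h)
    have hnbhd : ∀ s : {x : X // σ x = x}, ∃ U : Set X, IsCompact U ∧ IsOpen U ∧ s.1 ∈ U ∧
        (∀ (y : X) (hy : σ y = y), y ∈ U → h ⟨y, hy⟩ = h s) ∧ (∀ y ∈ U, σ y ∈ U) := by
      intro s
      obtain ⟨O, hOopen, hOpre⟩ := isOpen_induced_iff.1 (hh {h s})
      have hsO : s.1 ∈ O := by
        have hmem : s ∈ h ⁻¹' {h s} := rfl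
        rw [← hOpre] at hmem
        exact hmem
      obtain ⟨U, hUc, hUo, hxU, hUO, hUinv⟩ := TateAux.exists_invariant_nbhd hσ s.2 hOopen hsO
      refine ⟨U, hUc, hUo, hxU, ?_, hUinv⟩
      intro y hy hyU
      have hmem : (⟨y, hy⟩ : {x : X // σ x = x}) ∈ Subtype.val ⁻¹' O := hUO hyU
      rw [hOpre] at hmem
      exact hmem
    choose Ux hUc hUo hxU hUval hUinv using hnbhd
    obtain ⟨t, ht⟩ := hsupp_cpt.elim_nhds_subcover' (fun s _ => Subtype.val ⁻¹' Ux s)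
      (fun s hs => (((hUo s).preimage continuous_subtype_val).mem_nhds (hxU s)))
    set L : List (Set X × WittVector p k) :=
      t.toList.map (fun s => (Ux s.1, WittVector.mk p (fun n => if n = 0 then h s.1 else 0)))
      with hLdef
    obtain ⟨F, hFlc, hFinv, hFev⟩ := TateAux.glue hσ L (by
      intro P hP
      simp only [hLdef, List.mem_map] at hP
      obtain ⟨s, hst, rfl⟩ := hP
      exact ⟨hUc s.1, hUo s.1, hUinv s.1⟩)
    refine ⟨F, hFlc, ?_, hFinv, ?_⟩
    · apply HasCompactSupport.intro (t.isCompact_biUnion (fun s _ => hUc s.1))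
      intro x hx
      rcases hFev x with ⟨P, hPL, hxP, hFP⟩ | ⟨_, h0⟩
      · exfalso
        simp only [hLdef, List.mem_map] at hPL
        obtain ⟨s, hst, rfl⟩ := hPL
        exact hx (Set.mem_biUnion (Finset.mem_toList.1 hst) hxP)
      · exact h0
    · intro x
      rcases hFev x.1 with ⟨P, hPL, hxP, hFP⟩ | ⟨hnone, h0⟩
      · simp only [hLdef, List.mem_map] at hPL
        obtain ⟨s, hst, rfl⟩ := hPL
        rw [hFP]
        have hval : h x = h s.1 := hUval s.1 x.1 x.2 hxP
        simp only [WittVector.coeff_mk, if_pos rfl]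
        exact hval.symm
      · rw [h0]
        have hxsupp : x ∉ Function.support h := by
          intro hc
          have hmem := ht hc
          simp only [Set.mem_iUnion, exists_prop] at hmem
          obtain ⟨s, hst, hmemU⟩ := hmem
          exact hnone (Ux s.1, WittVector.mk p (fun n => if n = 0 then h s.1 else 0))
            (by
              simp only [hLdef, List.mem_map]
              exact ⟨s, Finset.mem_toList.2 hst, rfl⟩) hmemU
        rw [WittVector.zero_coeff]
        exact (not_not.1 fun hc => hxsupp (Function.mem_support.2 hc)).symm

  · -- part 5 : T¹ = 0
    intro f hf hfc hNf
    have hsupp_open : IsOpen (Function.support f) := by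
      have : Function.support f = f ⁻¹' {0}ᶜ := by ext y; simp [Function.mem_support]
      rw [this]; exact hf _
    have hsupp_closed : IsClosed (Function.support f) := by
      have : (Function.support f)ᶜ = f ⁻¹' {0} := by ext y; simp [Function.mem_support]
      rw [← isOpen_compl_iff, this]; exact hf _
    have hsupp_cpt : IsCompact (Function.support f) :=
      hfc.of_isClosed_subset hsupp_closed (subset_tsupport f)
    set K : Set X := ⋃ i ∈ Finset.range p, (⇑σ)^[i] ⁻¹' (Function.support f) with hKdef
    have hKc : IsCompact K := (Finset.range p).isCompact_biUnion
      fun i _ => TateAux.isCompact_preimage_iterate hsupp_cpt i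
    have hKo : IsOpen K := isOpen_biUnion fun i _ => hsupp_open.preimage (hσc.iterate i)
    have hmemK : ∀ {y : X}, y ∈ K ↔ ∃ i, i < p ∧ f ((⇑σ)^[i] y) ≠ 0 := by
      intro y
      simp only [hKdef, Set.mem_iUnion, Set.mem_preimage, Finset.mem_range, exists_prop,
        Function.mem_support]
    have hKinv : ∀ y ∈ K, σ y ∈ K := by
      intro y hy
      obtain ⟨i, hip, hif⟩ := hmemK.1 hy
      rcases Nat.eq_zero_or_pos i with rfl | hi0
      · refine hmemK.2 ⟨p - 1, by omega, ?_⟩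
        rw [← Function.iterate_succ_apply, show (p-1).succ = p by omega, hσ]
        simpa using hif
      · refine hmemK.2 ⟨i - 1, by omega, ?_⟩
        rw [← Function.iterate_succ_apply, show (i-1).succ = i by omega]
        exact hif
    have hfK0 : ∀ x, x ∉ K → f x = 0 := by
      intro x hx
      by_contra h0
      exact hx (hmemK.2 ⟨0, hp0, by simpa using h0⟩)
    have hfree : ∀ x ∈ K, ¬ σ x = x := by
      intro x hx hfix
      obtain ⟨i, hip, hif⟩ := hmemK.1 hx
      rw [Function.iterate_fixed hfix] at hif
      have hsum := hNf x
      simp only [Function.iterate_fixed hfix] at hsum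
      rw [Finset.sum_const, Finset.card_range, nsmul_eq_mul] at hsum
      rcases mul_eq_zero.1 hsum with h | h
      · exact WittVector.p_nonzero p k (by exact_mod_cast h)
      · exact hif h
    obtain ⟨V, hVc, hVo, hVK, hVcov, hVD⟩ := TateAux.exists_fundamental_domain hσ hKc hKo hfree
    set Sets : ℕ → Set X := fun j => ⋃ i ∈ Finset.range (j + 1), (⇑σ)^[i] ⁻¹' V with hSets
    have hSetsClopen : ∀ j, IsClopen (Sets j) := by
      intro j
      constructor
      · exact Set.Finite.isClosed_biUnion (Finset.finite_toSet _)
          fun i _ => hVc.isClosed.preimage (hσc.iterate i)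
      · exact isOpen_biUnion fun i _ => hVo.preimage (hσc.iterate i)
    set g : X → WittVector p k :=
      fun x => -∑ j ∈ Finset.range p, (Sets j).indicator (fun y => f ((⇑σ)^[j] y)) x with hgdef
    have hglc : IsLocallyConstant g := by
      have hsum := TateAux.isLocallyConstant_sum (Finset.range p)
        (fun j => (Sets j).indicator (fun y => f ((⇑σ)^[j] y)))
        (fun j _ => TateAux.isLocallyConstant_indicator (hSetsClopen j)
          (hf.comp_continuous (hσc.iterate j)))
      exact hsum.comp (fun w => -w)
    have hg0 : ∀ x, x ∉ K → g x = 0 := by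
      intro x hx
      simp only [hgdef, neg_eq_zero]
      refine Finset.sum_eq_zero fun j hj => ?_
      rw [Finset.mem_range] at hj
      apply Set.indicator_of_notMem
      intro hmem
      simp only [hSets, Set.mem_iUnion, Set.mem_preimage, Finset.mem_range, exists_prop] at hmem
      obtain ⟨i, hij, hiV⟩ := hmem
      exact hx (TateAux.mem_of_iterate_mem hσ hKinv (by omega) (hVK hiV))
    have hgc : HasCompactSupport g := HasCompactSupport.intro hKc hg0
    have hIco : ∀ (m : ℕ) (t : ℕ → WittVector p k),
        (∑ j ∈ Finset.range p, if m ≤ j then t j else 0) = ∑ j ∈ Finset.Ico m p, t j := by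
      intro m t
      rw [← Finset.sum_filter]
      congr 1
      ext a
      simp only [Finset.mem_filter, Finset.mem_range, Finset.mem_Ico]
      omega
    have heval : ∀ x, x ∈ K → ∀ m, m < p → (⇑σ)^[m] x ∈ V →
        g x = -∑ j ∈ Finset.Ico m p, f ((⇑σ)^[j] x) := by
      intro x hx m hm hmV
      simp only [hgdef, neg_inj]
      rw [← hIco m (fun j => f ((⇑σ)^[j] x))]
      refine Finset.sum_congr rfl fun j hj => ?_
      rw [Finset.mem_range] at hj
      by_cases hmj : m ≤ j
      · rw [if_pos hmj, Set.indicator_of_mem]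
        simp only [hSets, Set.mem_iUnion, Set.mem_preimage, Finset.mem_range, exists_prop]
        exact ⟨m, by omega, hmV⟩
      · rw [if_neg hmj]
        apply Set.indicator_of_notMem
        intro hmem
        simp only [hSets, Set.mem_iUnion, Set.mem_preimage, Finset.mem_range, exists_prop] at hmem
        obtain ⟨i, hij, hiV⟩ := hmem
        have : i = m := TateAux.fd_unique hσ hVD (by omega) hm hiV hmV
        omega
    refine ⟨g, hglc, hgc, ?_⟩
    intro x
    by_cases hx : x ∈ K
    · obtain ⟨m, hm, hmV⟩ := hVcov x hx
      have hσx : σ x ∈ K := hKinv x hx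
      rcases Nat.eq_zero_or_pos m with rfl | hm0
      · have hgx : g x = 0 := by
          rw [heval x hx 0 hp0 hmV, neg_eq_zero]
          have hIco0 : Finset.Ico 0 p = Finset.range p := by ext a; simp
          rw [hIco0]
          exact hNf x
        have hxV : x ∈ V := by simpa using hmV
        have hmV' : (⇑σ)^[p-1] (σ x) ∈ V := by
          rw [← Function.iterate_succ_apply, show (p-1).succ = p by omega, hσ]
          exact hxV
        have hgσx : g (σ x) = -f x := by
          rw [heval (σ x) hσx (p-1) (by omega) hmV']
          have hsing : Finset.Ico (p-1) p = {p-1} := by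
            ext a; simp only [Finset.mem_Ico, Finset.mem_singleton]; omega
          rw [hsing, Finset.sum_singleton, ← Function.iterate_succ_apply,
            show (p-1).succ = p by omega, hσ]
        rw [hgx, hgσx]; ring
      · have hmV' : (⇑σ)^[m-1] (σ x) ∈ V := by
          rw [← Function.iterate_succ_apply, show (m-1).succ = m by omega]
          exact hmV
        rw [heval x hx m hm hmV, heval (σ x) hσx (m-1) (by omega) hmV']
        rw [Finset.sum_Ico_eq_sum_range, Finset.sum_Ico_eq_sum_range]
        have hre : ∀ i : ℕ, f ((⇑σ)^[m - 1 + i] (σ x)) = f ((⇑σ)^[m + i] x) := by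
          intro i
          rw [← Function.iterate_succ_apply, show (m - 1 + i).succ = m + i by omega]
        simp only [hre]
        rw [show p - (m - 1) = (p - m) + 1 by omega, Finset.sum_range_succ,
          show m + (p - m) = p by omega, hσ]
        ring
    · have hσxK : σ x ∉ K := by
        intro hc
        exact hx (TateAux.mem_of_iterate_mem hσ hKinv (i := 1) hp0 (by simpa using hc))
      rw [hfK0 x hx, hg0 x hx, hg0 _ hσxK]
      ring
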